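/- In an intra-regular LA-semihypergroup H with pure left identity, a nonempty subset Q is a quasi hyperideal (H ∘ Q ∩ Q ∘ H ⊆ Q) if and only if H ∘ Q ∩ Q ∘ H = Q. Moreover, for any quasi hyperideal Q, H ∘ Q = Q ∘ H. -/
import Mathlib


open Set

/-- Elementwise extension of a hyperoperation to subsets:
`hmul op A B = ⋃_{a∈A, b∈B} op a b`. -/
def hmul {H : Type*} (op : H → H → Set H) (A B : Set H) : Set H :=
  ⋃ a ∈ A, ⋃ b ∈ B, op a b

section aux
variable {H : Type*} (op : H → H → Set H)

lemma mem_hmul' {t : H} {A B : Set H} :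
    t ∈ hmul op A B ↔ ∃ a ∈ A, ∃ b ∈ B, t ∈ op a b := by
  simp [hmul]

lemma hmul_mono' {A A' B B' : Set H} (hA : A ⊆ A') (hB : B ⊆ B') :
    hmul op A B ⊆ hmul op A' B' := by
  intro t ht
  rw [mem_hmul'] at ht ⊢
  obtain ⟨a, ha, b, hb, h⟩ := ht
  exact ⟨a, hA ha, b, hB hb, h⟩

lemma hmul_singleton' (a b : H) : hmul op {a} {b} = op a b := by
  simp [hmul]

variable (hLA : ∀ x y z : H, hmul op (op x y) {z} = hmul op (op z y) {x})

include hLA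

lemma inv_set (A B C : Set H) :
    hmul op (hmul op A B) C = hmul op (hmul op C B) A := by
  ext t
  simp only [mem_hmul']
  constructor
  · rintro ⟨s, ⟨a, ha, b, hb, hs⟩, c, hc, ht⟩
    have h := hLA a b c
    have : t ∈ hmul op (op a b) {c} := by
      rw [mem_hmul']; exact ⟨s, hs, c, rfl, ht⟩
    rw [h, mem_hmul'] at this
    obtain ⟨s', hs', a', ha', ht'⟩ := this
    simp only [mem_singleton_iff] at ha'
    rw [ha'] at ht'
    exact ⟨s', ⟨c, hc, b, hb, hs'⟩, a, ha, ht'⟩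
  · rintro ⟨s, ⟨c, hc, b, hb, hs⟩, a, ha, ht⟩
    have h := hLA a b c
    have : t ∈ hmul op (op c b) {a} := by
      rw [mem_hmul']; exact ⟨s, hs, a, rfl, ht⟩
    rw [← h, mem_hmul'] at this
    obtain ⟨s', hs', c', hc', ht'⟩ := this
    simp only [mem_singleton_iff] at hc'
    rw [hc'] at ht'
    exact ⟨s', ⟨a, ha, b, hb, hs'⟩, c, hc, ht'⟩

variable (e : H) (he : ∀ a : H, op e a = {a})

include he

omit hLA in
lemma e_left (A : Set H) : hmul op {e} A = A := by
  ext t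
  simp [mem_hmul', he]

omit he in
lemma medial_set (A B C D : Set H) :
    hmul op (hmul op A B) (hmul op C D) = hmul op (hmul op A C) (hmul op B D) := by
  rw [inv_set op hLA A B (hmul op C D), inv_set op hLA C D B,
    inv_set op hLA (hmul op B D) C A]

lemma lawL (A B C : Set H) :
    hmul op A (hmul op B C) = hmul op B (hmul op A C) := by
  conv_lhs => rw [← e_left op e he A]
  rw [medial_set op hLA, e_left op e he]

lemma paramedial_set (A B C D : Set H) :
    hmul op (hmul op A B) (hmul op C D) = hmul op (hmul op D B) (hmul op C A) := by
  rw [medial_set op hLA]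
  conv_lhs => rw [← e_left op e he A]
  rw [inv_set op hLA {e} A C, medial_set op hLA, e_left op e he,
    inv_set op hLA (hmul op C A) B D]

lemma HQ_sub_QH (hir : ∀ a : H, ∃ x y : H, a ∈ hmul op (hmul op {x} (op a a)) {y})
    (Q : Set H) : hmul op univ Q ⊆ hmul op Q univ := by
  intro t ht
  rw [mem_hmul'] at ht
  obtain ⟨h, -, q, hq, htq⟩ := ht
  obtain ⟨x, y, hxy⟩ := hir t
  -- op t t ⊆ (qq)(hh)
  have h1 : op t t ⊆ hmul op (hmul op {q} {q}) (hmul op {h} {h}) := by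
    rw [← hmul_singleton' op t t, ← paramedial_set op hLA e he {h} {q} {h} {q}]
    exact hmul_mono' op (by rw [hmul_singleton']; exact singleton_subset_iff.2 htq)
      (by rw [hmul_singleton']; exact singleton_subset_iff.2 htq)
  have h2 : hmul op {x} (op t t) ⊆
      hmul op (hmul op {q} {q}) (hmul op {x} (hmul op {h} {h})) := by
    rw [← lawL op hLA e he]
    exact hmul_mono' op subset_rfl h1
  have h3 : hmul op (hmul op {x} (op t t)) {y} ⊆ hmul op Q univ := by
    intro u hu
    have hu' : u ∈ hmul op (hmul op (hmul op {q} {q})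
        (hmul op {x} (hmul op {h} {h}))) {y} :=
      hmul_mono' op h2 subset_rfl hu
    rw [inv_set op hLA] at hu'
    have hu'' : u ∈ hmul op {q} (hmul op
        (hmul op {y} (hmul op {x} (hmul op {h} {h}))) {q}) := by
      rw [← lawL op hLA e he]; exact hu'
    exact hmul_mono' op (singleton_subset_iff.2 hq) (subset_univ _) hu''
  exact h3 hxy

lemma QH_eq_HQe (Q : Set H) :
    hmul op Q univ = hmul op (hmul op univ Q) {e} := by
  conv_lhs => rw [← e_left op e he Q, inv_set op hLA]

lemma HQ_eq_QHe (Q : Set H) :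
    hmul op univ Q = hmul op (hmul op Q univ) {e} := by
  conv_lhs => rw [← e_left op e he univ, inv_set op hLA]

lemma HQ_eq_QH (hir : ∀ a : H, ∃ x y : H, a ∈ hmul op (hmul op {x} (op a a)) {y})
    (Q : Set H) : hmul op univ Q = hmul op Q univ := by
  refine subset_antisymm (HQ_sub_QH op hLA e he hir Q) ?_
  calc hmul op Q univ = hmul op (hmul op univ Q) {e} := QH_eq_HQe op hLA e he Q
    _ ⊆ hmul op (hmul op Q univ) {e} :=
        hmul_mono' op (HQ_sub_QH op hLA e he hir Q) subset_rfl
    _ = hmul op univ Q := (HQ_eq_QHe op hLA e he Q).symm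

end aux

theorem stmt17 {H : Type*} (op : H → H → Set H)
    (hne : ∀ a b : H, (op a b).Nonempty)
    (hLA : ∀ x y z : H, hmul op (op x y) {z} = hmul op (op z y) {x})
    (e : H) (he : ∀ a : H, op e a = {a})
    (hir : ∀ a : H, ∃ x y : H, a ∈ hmul op (hmul op {x} (op a a)) {y}) :
    ∀ Q : Set H, Q.Nonempty →
      ((hmul op Set.univ Q ∩ hmul op Q Set.univ ⊆ Q) ↔
        hmul op Set.univ Q ∩ hmul op Q Set.univ = Q) ∧
      ((hmul op Set.univ Q ∩ hmul op Q Set.univ ⊆ Q) →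
        hmul op Set.univ Q = hmul op Q Set.univ) := by
  intro Q hQ
  have hEq := HQ_eq_QH op hLA e he hir Q
  have hQsubHQ : Q ⊆ hmul op univ Q := by
    conv_lhs => rw [← e_left op e he Q]
    exact hmul_mono' op (subset_univ _) subset_rfl
  constructor
  · constructor
    · intro hquasi
      refine subset_antisymm hquasi ?_
      exact subset_inter hQsubHQ (hEq ▸ hQsubHQ)
    · intro heq; exact heq.subset
  · intro _; exact hEq
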